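/- Let G be a connected bipartite graph with color classes A and B satisfying |A| = |B|. Then the following three statements are equivalent: (i) G is matching covered; (ii) |N_G(Z)| ≥ |Z| + 1 for every nonempty proper subset Z of A; (iii) for each pair of vertices a ∈ A and b ∈ B, the graph G − a − b has a perfect matching. -/

import Mathlib

namespace MinimalBraces

open SimpleGraph

/-- The degree of a vertex, via the cardinality of its neighbor set. -/
noncomputable def mdeg {V : Type*} (G : SimpleGraph V) (v : V) : ℕ :=
  (G.neighborSet v).ncard

/-- `G` has a perfect matching. -/
def HasPerfectMatching {V : Type*} (G : SimpleGraph V) : Prop :=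
  ∃ M : G.Subgraph, M.IsPerfectMatching

/-- A connected graph with at least one edge is matching covered if every edge
lies in some perfect matching. -/
def IsMatchingCovered {V : Type*} (G : SimpleGraph V) : Prop :=
  G.Connected ∧ G.edgeSet.Nonempty ∧
    ∀ e ∈ G.edgeSet, ∃ M : G.Subgraph, M.IsPerfectMatching ∧ e ∈ M.edgeSet

/-- `A`, `B` are the color classes of a bipartition of `G`. -/
def IsBipartition {V : Type*} (G : SimpleGraph V) (A B : Set V) : Prop :=
  A ∪ B = Set.univ ∧ A ∩ B = ∅ ∧
    ∀ u v : V, G.Adj u v → (u ∈ A ∧ v ∈ B) ∨ (u ∈ B ∧ v ∈ A)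

/-- `G` is bipartite (admits a bipartition into two color classes). -/
def IsBipartite' {V : Type*} (G : SimpleGraph V) : Prop :=
  ∃ A B : Set V, IsBipartition G A B

/-- The cut `∂(X)`: the set of edges of `G` with exactly one end in `X`. -/
def cutEdges {V : Type*} (G : SimpleGraph V) (X : Set V) : Set (Sym2 V) :=
  {e | e ∈ G.edgeSet ∧ ∃ u v : V, e = s(u, v) ∧ u ∈ X ∧ v ∉ X}

/-- The cut `∂(X)` is tight: every perfect matching has exactly one edge in it. -/
def IsTightCut {V : Type*} (G : SimpleGraph V) (X : Set V) : Prop :=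
  ∀ M : G.Subgraph, M.IsPerfectMatching → (M.edgeSet ∩ cutEdges G X).ncard = 1

/-- A shore is trivial if it or its complement is a singleton. -/
def IsTrivialShore {V : Type*} (X : Set V) : Prop :=
  (∃ v, X = ({v} : Set V)) ∨ (∃ v, Xᶜ = ({v} : Set V))

/-- A brace: a bipartite matching covered graph free of nontrivial tight cuts. -/
def IsBrace {V : Type*} (G : SimpleGraph V) : Prop :=
  IsBipartite' G ∧ IsMatchingCovered G ∧ ∀ X : Set V, IsTightCut G X → IsTrivialShore X

/-- A minimal brace: deleting any edge results in a graph that is not a brace. -/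
def IsMinimalBrace {V : Type*} (G : SimpleGraph V) : Prop :=
  IsBrace G ∧ ∀ e ∈ G.edgeSet, ¬ IsBrace (G.deleteEdges {e})

/-- The neighborhood of a set of vertices. -/
def setNbhd {V : Type*} (G : SimpleGraph V) (Z : Set V) : Set V :=
  {v | ∃ z ∈ Z, G.Adj z v}

/-- An edge of a (simple) brace is superfluous if deleting it leaves a brace. -/
def IsSuperfluous {V : Type*} (G : SimpleGraph V) (e : Sym2 V) : Prop :=
  e ∈ G.edgeSet ∧ IsBrace (G.deleteEdges {e})

/-- A set of edges of `G` forming a matching. -/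
def IsMatchingSet {V : Type*} (G : SimpleGraph V) (M : Set (Sym2 V)) : Prop :=
  M ⊆ G.edgeSet ∧ ∀ e₁ ∈ M, ∀ e₂ ∈ M, e₁ ≠ e₂ → ∀ v : V, ¬ (v ∈ e₁ ∧ v ∈ e₂)

/-- `G` is 2-extendable: it has a matching of size two, and every matching of
size two extends to a perfect matching. -/
def IsTwoExtendable {V : Type*} (G : SimpleGraph V) : Prop :=
  (∃ M : Set (Sym2 V), IsMatchingSet G M ∧ M.ncard = 2) ∧
  ∀ M : Set (Sym2 V), IsMatchingSet G M → M.ncard = 2 →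
    ∃ N : G.Subgraph, N.IsPerfectMatching ∧ M ⊆ N.edgeSet

/-- `G` is 3-connected: more than three vertices, and removing any at most two
vertices leaves a connected graph. -/
def IsThreeConnected {V : Type*} [Fintype V] (G : SimpleGraph V) : Prop :=
  4 ≤ Fintype.card V ∧ ∀ S : Set V, S.ncard ≤ 2 → (G.induce Sᶜ).Connected

/-! ### Retracts (bicontraction of all degree-two vertices) -/

/-- `f : V → W` realizes `H` as the retract of `G`: the fibers of `f` are exactly
the closed neighborhoods of the degree-two vertices of `G` (and singletons
otherwise), and adjacency in `H` is induced by `G`. -/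
def IsRetractMap {V W : Type*} (G : SimpleGraph V) (H : SimpleGraph W) (f : V → W) : Prop :=
  Function.Surjective f ∧
  (∀ u v : V, f u = f v ↔ (u = v ∨ ∃ v₀ : V, mdeg G v₀ = 2 ∧
      u ∈ insert v₀ (G.neighborSet v₀) ∧ v ∈ insert v₀ (G.neighborSet v₀))) ∧
  (∀ x y : W, H.Adj x y ↔ (x ≠ y ∧ ∃ u v : V, G.Adj u v ∧ f u = x ∧ f v = y))

/-- The retract obtained via `f` is a simple graph, i.e. no two distinct edges of `G`
become parallel after the bicontractions. -/
def RetractMapSimple {V W : Type*} (G : SimpleGraph V) (f : V → W) : Prop :=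
  ∀ e₁ ∈ G.edgeSet, ∀ e₂ ∈ G.edgeSet,
    Sym2.map f e₁ = Sym2.map f e₂ → ¬ (Sym2.map f e₁).IsDiag → e₁ = e₂

/-- An edge `e` of a brace `G` is thin if the retract of `G − e` is also a brace. -/
def IsThinEdge {V : Type*} (G : SimpleGraph V) (e : Sym2 V) : Prop :=
  e ∈ G.edgeSet ∧ ∃ (sH : Set V) (H : SimpleGraph sH) (f : V → sH),
    IsRetractMap (G.deleteEdges {e}) H f ∧ IsBrace H

/-- `e` is a strictly thin edge of `G`, with retract `H` realized by the map `f`: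
the retract of `G − e` is a brace and is simple. -/
def IsStrictlyThinVia {V W : Type*} (G : SimpleGraph V) (e : Sym2 V)
    (H : SimpleGraph W) (f : V → W) : Prop :=
  e ∈ G.edgeSet ∧ IsRetractMap (G.deleteEdges {e}) H f ∧ IsBrace H ∧
    RetractMapSimple (G.deleteEdges {e}) f

/-- `e` is a strictly thin edge of the simple brace `G`. -/
def IsStrictlyThinEdge {V : Type*} (G : SimpleGraph V) (e : Sym2 V) : Prop :=
  ∃ (sH : Set V) (H : SimpleGraph sH) (f : V → sH), IsStrictlyThinVia G e H f

/-- The index of a (strictly thin) edge `e`, computed from `G' = G − e`: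
the number of vertices of degree two in `G'`. -/
noncomputable def thinIndex {V : Type*} (G' : SimpleGraph V) : ℕ :=
  {v : V | mdeg G' v = 2}.ncard

/-- An inner vertex of `G' = G − e`: a vertex of degree two. -/
def IsInnerVertex {V : Type*} (G' : SimpleGraph V) (v : V) : Prop := mdeg G' v = 2

/-- An outer vertex of `G' = G − e`: a neighbor of an inner vertex. -/
def IsOuterVertex {V : Type*} (G' : SimpleGraph V) (v : V) : Prop :=
  ∃ u : V, IsInnerVertex G' u ∧ G'.Adj u v

/-- `(e, F)` is a minimality-preserving pair of the minimal brace `G`, where the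
retract `H` of `G − e` is realized by `f`: the edge `e` is strictly thin and
`H − F` is a minimal brace. -/
def IsMPPVia {V W : Type*} (G : SimpleGraph V) (H : SimpleGraph W) (f : V → W)
    (e : Sym2 V) (F : Set (Sym2 W)) : Prop :=
  IsMinimalBrace G ∧ IsStrictlyThinVia G e H f ∧ F ⊆ H.edgeSet ∧
    IsMinimalBrace (H.deleteEdges F)

/-! ### Stable extensions -/

/-- The `S`-extension of `J` with respect to `S = {a₁, a₂, b₁, b₂}`:
two new vertices `a₀ = inr 0` and `b₀ = inr 1` and five new edges
`a₀b₁, a₀b₂, b₀a₁, b₀a₂, a₀b₀`. -/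
def stableExtGraph {U : Type*} (J : SimpleGraph U) (a₁ a₂ b₁ b₂ : U) :
    SimpleGraph (U ⊕ Fin 2) :=
  SimpleGraph.fromRel (fun x y =>
    match x, y with
    | Sum.inl u, Sum.inl v => J.Adj u v
    | Sum.inl u, Sum.inr k => (k = 0 ∧ (u = b₁ ∨ u = b₂)) ∨ (k = 1 ∧ (u = a₁ ∨ u = a₂))
    | Sum.inr j, Sum.inr k => j ≠ k
    | Sum.inr _, Sum.inl _ => False)

/-- `G` is (isomorphic to) a stable-extension of the connected bipartite graph `J`,
with respect to some stable set meeting each color class in exactly two vertices. -/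
def IsStableExtensionOf {V U : Type*} (G : SimpleGraph V) (J : SimpleGraph U) : Prop :=
  ∃ (A B : Set U) (a₁ a₂ b₁ b₂ : U), J.Connected ∧ IsBipartition J A B ∧
    a₁ ∈ A ∧ a₂ ∈ A ∧ b₁ ∈ B ∧ b₂ ∈ B ∧ a₁ ≠ a₂ ∧ b₁ ≠ b₂ ∧
    ¬ J.Adj a₁ b₁ ∧ ¬ J.Adj a₁ b₂ ∧ ¬ J.Adj a₂ b₁ ∧ ¬ J.Adj a₂ b₂ ∧
    Nonempty (G ≃g stableExtGraph J a₁ a₂ b₁ b₂)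

/-! ### Concrete families of graphs -/

/-- The complete graph on two vertices. -/
def K2graph : SimpleGraph (Fin 2) := ⊤

/-- The cycle graph `Cₙ` on `ZMod n`. -/
def cycleGraph (n : ℕ) : SimpleGraph (ZMod n) :=
  SimpleGraph.fromRel (fun x y => x - y = 1)

/-- The Möbius ladder `M_{2m}`: the cycle `C_{2m}` plus the long chords. -/
def mobiusLadder (m : ℕ) : SimpleGraph (ZMod (2 * m)) :=
  SimpleGraph.fromRel (fun x y => x - y = 1 ∨ x - y = (m : ZMod (2 * m)))

/-- The prism (ladder) over the cycle `Cₘ`. -/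
def prismGraph (m : ℕ) : SimpleGraph (ZMod m × Bool) :=
  SimpleGraph.fromRel (fun p q => (p.2 = q.2 ∧ p.1 - q.1 = 1) ∨ (p.1 = q.1 ∧ p.2 ≠ q.2))

/-- The biwheel `B_{2m+2}`: the cycle `C_{2m}` plus two nonadjacent hubs, one joined to
all even rim vertices, the other to all odd rim vertices. `B_{2n} = biwheel (n-1)`. -/
def biwheel (m : ℕ) : SimpleGraph (ZMod (2 * m) ⊕ Fin 2) :=
  SimpleGraph.fromRel (fun x y =>
    match x, y with
    | Sum.inl a, Sum.inl b => a - b = 1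
    | Sum.inl a, Sum.inr k => (k = 0 ∧ Even a) ∨ (k = 1 ∧ ¬ Even a)
    | Sum.inr _, _ => False)

/-- The complete bipartite graph `K_{3,3}`. -/
def K33graph : SimpleGraph (Fin 3 ⊕ Fin 3) := completeBipartiteGraph (Fin 3) (Fin 3)

/-- The family `𝒢` : `K₂`, `C₄` and the McCuaig braces
(prisms, Möbius ladders and biwheels). -/
def InMcCuaigFamily {V : Type*} (G : SimpleGraph V) : Prop :=
  Nonempty (G ≃g K2graph) ∨ Nonempty (G ≃g cycleGraph 4) ∨
  (∃ m : ℕ, 3 ≤ m ∧ Nonempty (G ≃g prismGraph m)) ∨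
  (∃ m : ℕ, 3 ≤ m ∧ Nonempty (G ≃g mobiusLadder m)) ∨
  (∃ m : ℕ, 3 ≤ m ∧ Nonempty (G ≃g biwheel m))

/-- The graph `Q_{2n}` (for `n ≥ 5`): color classes `{0, …, n-1}` on each side; the
hubs `0, 1` of each side are joined to all vertices `2, …, n-1` of the other side,
and the vertices `2, …, n-1` form a perfect matching between the two sides.
`Qgraph 5 = Q₁₀`, `Qgraph 6 = Q₁₂`, and `Qgraph n = Q_{2n}` of the family `𝒬` for `n ≥ 6`. -/
def Qgraph (n : ℕ) : SimpleGraph (Fin n ⊕ Fin n) :=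
  SimpleGraph.fromRel (fun x y =>
    match x, y with
    | Sum.inl i, Sum.inr j =>
        ((i : ℕ) < 2 ∧ 2 ≤ (j : ℕ)) ∨ ((j : ℕ) < 2 ∧ 2 ≤ (i : ℕ)) ∨
          ((i : ℕ) = (j : ℕ) ∧ 2 ≤ (i : ℕ))
    | _, _ => False)

/-- `Q₁₀⁺`: the graph `Q₁₀` plus an edge joining two noncubic vertices that lie in
distinct color classes (and in distinct `K_{3,3}`-pieces of the tight cut
decomposition of `Q₁₀`). -/
def Q10plus : SimpleGraph (Fin 5 ⊕ Fin 5) :=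
  Qgraph 5 ⊔ SimpleGraph.fromEdgeSet {s((Sum.inl 0 : Fin 5 ⊕ Fin 5), (Sum.inr 0 : Fin 5 ⊕ Fin 5))}

/-- The bipartite complement of `G` with respect to the color classes `A`, `B`. -/
def bipComplement {V : Type*} (G : SimpleGraph V) (A B : Set V) : SimpleGraph V :=
  SimpleGraph.fromRel (fun u v => u ∈ A ∧ v ∈ B ∧ ¬ G.Adj u v)

/-! ### Bi-splitting and expansion operations -/

/-- `G` is obtained from `H` by bi-splitting the noncubic vertex `b` into `b₁ a₀ b₂`,
as witnessed by the projection `f : W → V` (which sends `b₁, a₀, b₂` to `b` and is a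
bijection elsewhere). The edges of `H` at `b` are distributed between `b₁` and `b₂`,
each receiving at least two, and `a₀` is a new vertex adjacent precisely to `b₁, b₂`. -/
def IsBisplitMap {V W : Type*} (H : SimpleGraph V) (b : V) (G : SimpleGraph W)
    (b₁ a₀ b₂ : W) (f : W → V) : Prop :=
  4 ≤ mdeg H b ∧
  Function.Surjective f ∧ f b₁ = b ∧ f a₀ = b ∧ f b₂ = b ∧
  b₁ ≠ b₂ ∧ a₀ ≠ b₁ ∧ a₀ ≠ b₂ ∧
  (∀ u v : W, f u = f v → u = v ∨
      (u ∈ ({b₁, a₀, b₂} : Set W) ∧ v ∈ ({b₁, a₀, b₂} : Set W))) ∧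
  G.neighborSet a₀ = {b₁, b₂} ∧
  3 ≤ mdeg G b₁ ∧ 3 ≤ mdeg G b₂ ∧ ¬ G.Adj b₁ b₂ ∧
  (∀ x : W, x ≠ a₀ → ¬ (G.Adj b₁ x ∧ G.Adj b₂ x)) ∧
  (∀ x y : V, H.Adj x y ↔ (x ≠ y ∧ ∃ u v : W, G.Adj u v ∧ f u = x ∧ f v = y))

/-- Expansion of index zero: adding an edge joining two nonadjacent vertices in
distinct color classes. -/
def ExpansionZero {W V : Type*} (G : SimpleGraph W) (H : SimpleGraph V) : Prop :=
  ∃ (A B : Set V) (a b : V), IsBipartition H A B ∧ a ∈ A ∧ b ∈ B ∧ ¬ H.Adj a b ∧ a ≠ b ∧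
    Nonempty (G ≃g (H ⊔ SimpleGraph.fromEdgeSet {s(a, b)}))

/-- Expansion of index one: `G = H{a → a₁b₀a₂} + b₀w`, where `a, w` are in the same
color class of `H` and `a` is noncubic. -/
def ExpansionOne {W V : Type*} (G : SimpleGraph W) (H : SimpleGraph V) : Prop :=
  ∃ (A B : Set V) (a w : V), IsBipartition H A B ∧
    ((a ∈ A ∧ w ∈ A) ∨ (a ∈ B ∧ w ∈ B)) ∧ a ≠ w ∧ 4 ≤ mdeg H a ∧
    ∃ (G₁ : SimpleGraph W) (a₁ b₀ a₂ : W) (f : W → V) (w' : W),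
      IsBisplitMap H a G₁ a₁ b₀ a₂ f ∧ f w' = w ∧
      G = G₁ ⊔ SimpleGraph.fromEdgeSet {s(b₀, w')}

/-- Expansion of index two: `G = H{a → a₁b₀a₂}{b → b₁a₀b₂} + a₀b₀`, where `a, b` are
noncubic vertices of `H` in distinct color classes. -/
def ExpansionTwo {W V : Type*} (G : SimpleGraph W) (H : SimpleGraph V) : Prop :=
  ∃ (A B : Set V) (a b : V), IsBipartition H A B ∧ a ∈ A ∧ b ∈ B ∧
    4 ≤ mdeg H a ∧ 4 ≤ mdeg H b ∧
    ∃ (sm : Set W) (G₁ : SimpleGraph sm) (a₁ b₀ a₂ : sm) (g : sm → V),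
      IsBisplitMap H a G₁ a₁ b₀ a₂ g ∧
      ∃ (b' : sm) (G₂ : SimpleGraph W) (b₁ a₀ b₂ : W) (f : W → sm) (b₀' : W),
        g b' = b ∧ IsBisplitMap G₁ b' G₂ b₁ a₀ b₂ f ∧ f b₀' = b₀ ∧
        G = G₂ ⊔ SimpleGraph.fromEdgeSet {s(a₀, b₀')}

/-- `G` is obtained from `H` by an expansion operation (of index zero, one or two). -/
def IsExpansionOf {W V : Type*} (G : SimpleGraph W) (H : SimpleGraph V) : Prop :=
  ExpansionZero G H ∨ ExpansionOne G H ∨ ExpansionTwo G H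

/-! ### Narrow minimality-preserving pairs -/

/-- The properties of `F` (viewed in `G − e` via the retract map `fm`) required by the
Main Theorem: (i) if `index(e) = 1` then some outer vertex `v` has `F ⊆ ∂(v)`;
(ii) if `index(e) = 2` then some adjacent outer vertices `u, w` have `F ⊆ ∂({u,w})`;
(iii) for each `f ∈ F`, an end of `f` is cubic iff it is an outer vertex. -/
def NarrowProps {V W : Type*} (G : SimpleGraph V) (fm : V → W) (e : Sym2 V)
    (F : Set (Sym2 W)) : Prop :=
  (thinIndex (G.deleteEdges {e}) = 1 →
      ∃ v : V, IsOuterVertex (G.deleteEdges {e}) v ∧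
        ∀ g ∈ (G.deleteEdges {e}).edgeSet, Sym2.map fm g ∈ F → v ∈ g) ∧
  (thinIndex (G.deleteEdges {e}) = 2 →
      ∃ u w : V, IsOuterVertex (G.deleteEdges {e}) u ∧ IsOuterVertex (G.deleteEdges {e}) w ∧
        (G.deleteEdges {e}).Adj u w ∧
        ∀ g ∈ (G.deleteEdges {e}).edgeSet, Sym2.map fm g ∈ F →
          ((u ∈ g ∧ w ∉ g) ∨ (w ∈ g ∧ u ∉ g))) ∧
  (∀ g ∈ (G.deleteEdges {e}).edgeSet, Sym2.map fm g ∈ F →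
      ∀ x : V, x ∈ g → (mdeg G x = 3 ↔ IsOuterVertex (G.deleteEdges {e}) x))

/-- A narrow minimality-preserving pair, as in the Main Theorem. -/
def IsNarrowMPP {V W : Type*} (G : SimpleGraph V) (H : SimpleGraph W) (fm : V → W)
    (e : Sym2 V) (F : Set (Sym2 W)) : Prop :=
  IsMPPVia G H fm e F ∧
  (F = ∅ ∨ NarrowProps G fm e F) ∧
  F.ncard ≤ thinIndex (G.deleteEdges {e}) + 1 ∧
  (thinIndex (G.deleteEdges {e}) = 1 ∧ F.ncard = 2 →
    IsStableExtensionOf G (H.deleteEdges F))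



/-! ### Auxiliary lemmas for Statement 0 -/

private lemma pm_of_pairing {V : Type*} (H : SimpleGraph V) (P Q : Set V)
    (hcover : ∀ v, v ∈ P ∨ v ∈ Q) (hdisj : ∀ v, v ∈ P → v ∈ Q → False)
    (f : V → V)
    (hfQ : ∀ v ∈ P, f v ∈ Q) (hfadj : ∀ v ∈ P, H.Adj v (f v))
    (hinj : ∀ u ∈ P, ∀ v ∈ P, f u = f v → u = v)
    (hsurj : ∀ w ∈ Q, ∃ v ∈ P, f v = w) :
    HasPerfectMatching H := by
  refine ⟨⟨Set.univ, fun u v => (u ∈ P ∧ v = f u) ∨ (v ∈ P ∧ u = f v), ?_, fun _ => trivial,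
    ?_⟩, ?_⟩
  · rintro u v (⟨hu, rfl⟩ | ⟨hv, rfl⟩)
    · exact hfadj u hu
    · exact (hfadj v hv).symm
  · constructor; rintro u v (⟨hu, rfl⟩ | ⟨hv, rfl⟩)
    · exact Or.inr ⟨hu, rfl⟩
    · exact Or.inl ⟨hv, rfl⟩
  · rw [Subgraph.isPerfectMatching_iff]
    intro v
    by_cases hv : v ∈ P
    · refine ⟨f v, Or.inl ⟨hv, rfl⟩, ?_⟩
      rintro w (⟨_, rfl⟩ | ⟨hw, hvw⟩)
      · rfl
      · exact absurd (hvw ▸ hfQ w hw) (fun h => hdisj v hv h)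
    · obtain hQ := (hcover v).resolve_left hv
      obtain ⟨u, huP, hfu⟩ := hsurj v hQ
      refine ⟨u, Or.inr ⟨huP, hfu.symm⟩, ?_⟩
      rintro w (⟨hvP, _⟩ | ⟨hwP, hvw⟩)
      · exact absurd hvP hv
      · exact hinj w hwP u huP (by rw [← hvw, hfu])

private lemma lift_pm {V : Type*} (G : SimpleGraph V) (a b : V) (hab : G.Adj a b)
    (h : HasPerfectMatching (G.induce ({a, b}ᶜ : Set V))) :
    ∃ M : G.Subgraph, M.IsPerfectMatching ∧ s(a, b) ∈ M.edgeSet := by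
  obtain ⟨N, hN⟩ := h
  rw [Subgraph.isPerfectMatching_iff] at hN
  have hne : a ≠ b := hab.ne
  have hmem : ∀ v : V, v ∈ ({a, b}ᶜ : Set V) ↔ v ≠ a ∧ v ≠ b := by
    intro v; simp [Set.mem_compl_iff]
  refine ⟨⟨Set.univ, fun u v =>
      (∃ (hu : u ∈ ({a, b}ᶜ : Set V)) (hv : v ∈ ({a, b}ᶜ : Set V)), N.Adj ⟨u, hu⟩ ⟨v, hv⟩) ∨
        (u = a ∧ v = b) ∨ (u = b ∧ v = a),
      ?_, fun _ => trivial, ?_⟩, ?_, ?_⟩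
  · rintro u v (⟨hu, hv, huv⟩ | ⟨rfl, rfl⟩ | ⟨rfl, rfl⟩)
    · exact N.adj_sub huv
    · exact hab
    · exact hab.symm
  · constructor; rintro u v (⟨hu, hv, huv⟩ | ⟨rfl, rfl⟩ | ⟨rfl, rfl⟩)
    · exact Or.inl ⟨hv, hu, huv.symm⟩
    · exact Or.inr (Or.inr ⟨rfl, rfl⟩)
    · exact Or.inr (Or.inl ⟨rfl, rfl⟩)
  · rw [Subgraph.isPerfectMatching_iff]
    intro v
    by_cases hva : v = a
    · subst hva
      refine ⟨b, Or.inr (Or.inl ⟨rfl, rfl⟩), ?_⟩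
      rintro w (⟨hu, hw, _⟩ | ⟨_, rfl⟩ | ⟨hba, _⟩)
      · exact absurd rfl ((hmem v).mp hu).1
      · rfl
      · exact absurd hba hne
    · by_cases hvb : v = b
      · subst hvb
        refine ⟨a, Or.inr (Or.inr ⟨rfl, rfl⟩), ?_⟩
        rintro w (⟨hu, hw, _⟩ | ⟨hba, _⟩ | ⟨_, rfl⟩)
        · exact absurd rfl ((hmem v).mp hu).2
        · exact absurd hba (Ne.symm hne)
        · rfl
      · have hvS : v ∈ ({a, b}ᶜ : Set V) := (hmem v).mpr ⟨hva, hvb⟩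
        obtain ⟨w', hw'adj, hw'uniq⟩ := hN ⟨v, hvS⟩
        refine ⟨(w' : V), Or.inl ⟨hvS, w'.2, hw'adj⟩, ?_⟩
        rintro w (⟨hv', hw, hadj⟩ | ⟨rfl, _⟩ | ⟨rfl, _⟩)
        · exact congrArg Subtype.val (hw'uniq ⟨w, hw⟩ hadj)
        · exact absurd rfl hva
        · exact absurd rfl hvb
  · exact Or.inr (Or.inl ⟨rfl, rfl⟩)

private lemma hall_step {V : Type*} [Fintype V] (G : SimpleGraph V) (A B : Set V)
    (hbip : IsBipartition G A B) (hAB : A.ncard = B.ncard)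
    (h2 : ∀ Z : Set V, Z ⊆ A → Z.Nonempty → Z ≠ A → Z.ncard + 1 ≤ (setNbhd G Z).ncard)
    {a b : V} (ha : a ∈ A) (hb : b ∈ B) :
    HasPerfectMatching (G.induce ({a, b}ᶜ : Set V)) := by
  classical
  obtain ⟨hcov, hdisjAB, hadj⟩ := hbip
  have hdisj : ∀ v, v ∈ A → v ∈ B → False := fun v h1' h2' =>
    Set.eq_empty_iff_forall_notMem.mp hdisjAB v ⟨h1', h2'⟩
  set A' : Set V := A \ {a} with hA'def
  set B' : Set V := B \ {b} with hB'def
  set t : ↥A' → Finset V := fun z => ((G.neighborSet ↑z) \ {b}).toFinset with htdef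
  -- Hall's condition
  have key : ∀ s : Finset ↥A', s.card ≤ (s.biUnion t).card := by
    intro s
    rcases s.eq_empty_or_nonempty with rfl | hs
    · simp
    · set Z : Set V := Subtype.val '' (↑s : Set ↥A') with hZdef
      have hZA : Z ⊆ A := by rintro v ⟨z, _, rfl⟩; exact z.2.1
      have hZne : Z.Nonempty := hs.to_set.image _
      have haZ : a ∉ Z := by rintro ⟨z, _, hz⟩; exact z.2.2 (by simp [hz])
      have hZneA : Z ≠ A := fun h => haZ (h ▸ ha)
      have hcard : Z.ncard = s.card := by
        rw [hZdef, Set.ncard_image_of_injective _ Subtype.val_injective, Set.ncard_coe_finset]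
      have hsub : setNbhd G Z ⊆ insert b (↑(s.biUnion t) : Set V) := by
        rintro v ⟨z, ⟨z', hz's, rfl⟩, hzv⟩
        by_cases hvb : v = b
        · exact hvb ▸ Set.mem_insert _ _
        · refine Set.mem_insert_of_mem _ ?_
          rw [Finset.mem_coe, Finset.mem_biUnion]
          exact ⟨z', hz's, by rw [htdef]; simp only [Set.mem_toFinset, Set.mem_diff,
            Set.mem_singleton_iff]; exact ⟨hzv, hvb⟩⟩
      have := h2 Z hZA hZne hZneA
      have hle : (setNbhd G Z).ncard ≤ (↑(s.biUnion t) : Set V).ncard + 1 := by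
        calc (setNbhd G Z).ncard ≤ (insert b (↑(s.biUnion t) : Set V)).ncard :=
              Set.ncard_le_ncard hsub (Set.toFinite _)
          _ ≤ (↑(s.biUnion t) : Set V).ncard + 1 := Set.ncard_insert_le _ _
      rw [Set.ncard_coe_finset] at hle
      omega
  obtain ⟨f, hfinj, hft⟩ := (Finset.all_card_le_biUnion_card_iff_exists_injective t).mp key
  have hfadj : ∀ z : ↥A', G.Adj ↑z (f z) ∧ f z ≠ b := by
    intro z
    have := hft z
    rw [htdef] at this
    simp only [Set.mem_toFinset, Set.mem_diff, SimpleGraph.mem_neighborSet,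
      Set.mem_singleton_iff] at this
    exact this
  have hfB' : ∀ z : ↥A', f z ∈ B' := by
    intro z
    rcases hadj _ _ (hfadj z).1 with ⟨_, hB⟩ | ⟨hzB, _⟩
    · exact ⟨hB, (hfadj z).2⟩
    · exact absurd hzB (fun h => hdisj _ z.2.1 h)
  have hcardA'B' : Fintype.card ↥A' = Fintype.card ↥B' := by
    rw [← Nat.card_eq_fintype_card, ← Nat.card_eq_fintype_card,
      Nat.card_coe_set_eq, Nat.card_coe_set_eq, hA'def, hB'def,
      Set.ncard_diff_singleton_of_mem ha,
      Set.ncard_diff_singleton_of_mem hb, hAB]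
  set g : ↥A' → ↥B' := fun z => ⟨f z, hfB' z⟩ with hgdef
  have hginj : Function.Injective g := fun u v h =>
    hfinj (congrArg Subtype.val h)
  have hgbij : Function.Bijective g :=
    (Fintype.bijective_iff_injective_and_card g).mpr ⟨hginj, hcardA'B'⟩
  -- build the pairing on the induced graph
  set S : Set V := {a, b}ᶜ with hSdef
  have hSmem : ∀ v : V, v ∈ S ↔ v ≠ a ∧ v ≠ b := by intro v; simp [hSdef]
  have hB'S : ∀ z : ↥A', (f z : V) ∈ S := by
    intro z
    refine (hSmem _).mpr ⟨fun h => hdisj a ha (h ▸ (hfB' z).1), (hfB' z).2⟩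
  have hA'S : ∀ v : V, v ∈ A' → v ∈ S :=
    fun v hv => (hSmem _).mpr ⟨fun h => hv.2 (by simp [h]), fun h => hdisj v hv.1 (h ▸ hb)⟩
  set f' : ↥S → ↥S := fun x => if h : (↑x : V) ∈ A' then ⟨f ⟨↑x, h⟩, hB'S _⟩ else x with hf'def
  refine pm_of_pairing (G.induce S) {x : ↥S | (x : V) ∈ A} {x : ↥S | (x : V) ∈ B}
    ?_ (fun x hx1 hx2 => hdisj _ hx1 hx2) f' ?_ ?_ ?_ ?_
  · intro x
    have : (x : V) ∈ A ∪ B := hcov ▸ Set.mem_univ _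
    exact this
  · intro x hx
    have hxA' : (↑x : V) ∈ A' := ⟨hx, fun h => ((hSmem _).mp x.2).1 h⟩
    simp only [hf'def, dif_pos hxA']
    exact (hfB' ⟨↑x, hxA'⟩).1
  · intro x hx
    have hxA' : (↑x : V) ∈ A' := ⟨hx, fun h => ((hSmem _).mp x.2).1 h⟩
    simp only [hf'def, dif_pos hxA']
    exact (hfadj ⟨↑x, hxA'⟩).1
  · intro u hu v hv huv
    have huA' : (↑u : V) ∈ A' := ⟨hu, fun h => ((hSmem _).mp u.2).1 h⟩
    have hvA' : (↑v : V) ∈ A' := ⟨hv, fun h => ((hSmem _).mp v.2).1 h⟩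
    simp only [hf'def, dif_pos huA', dif_pos hvA'] at huv
    have : f ⟨↑u, huA'⟩ = f ⟨↑v, hvA'⟩ := congrArg Subtype.val huv
    have h3 := hfinj this
    rw [Subtype.ext_iff] at h3
    exact Subtype.ext h3
  · intro w hw
    have hwB' : (↑w : V) ∈ B' := ⟨hw, fun h => ((hSmem _).mp w.2).2 h⟩
    obtain ⟨z, hz⟩ := hgbij.2 ⟨↑w, hwB'⟩
    refine ⟨⟨↑z, hA'S _ z.2⟩, z.2.1, ?_⟩
    have hzA' : ((⟨↑z, hA'S _ z.2⟩ : ↥S) : V) ∈ A' := z.2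
    simp only [hf'def, dif_pos hzA']
    have hz' : f z = (↑w : V) := congrArg Subtype.val hz
    exact Subtype.ext hz'

private lemma partner_fn {V : Type*} {G : SimpleGraph V} {M : G.Subgraph}
    (hM : M.IsPerfectMatching) :
    ∃ μ : V → V, (∀ v, M.Adj v (μ v)) ∧ (∀ v w, M.Adj v w → w = μ v) := by
  rw [Subgraph.isPerfectMatching_iff] at hM
  choose μ h1 h2 using hM
  exact ⟨μ, h1, h2⟩

private lemma exists_classified_edge {V : Type*} [Fintype V] (G : SimpleGraph V)
    (A B : Set V) (hconn : G.Connected) (hbip : IsBipartition G A B)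
    (hAB : A.ncard = B.ncard) :
    ∃ a ∈ A, ∃ b ∈ B, G.Adj a b := by
  obtain ⟨hcov, hdisjAB, hadj⟩ := hbip
  have hdisj : ∀ v, v ∈ A → v ∈ B → False := fun v h1 h2 =>
    Set.eq_empty_iff_forall_notMem.mp hdisjAB v ⟨h1, h2⟩
  have hAne : A.Nonempty := by
    by_contra hA
    rw [Set.not_nonempty_iff_eq_empty] at hA
    have hB : B = ∅ := by
      rw [← Set.ncard_eq_zero (Set.toFinite _), ← hAB, hA, Set.ncard_empty]
    obtain ⟨v⟩ := hconn.nonempty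
    have : v ∈ A ∪ B := hcov ▸ Set.mem_univ v
    simp [hA, hB] at this
  obtain ⟨a, ha⟩ := hAne
  have hBne : B.Nonempty := by
    rw [← Set.ncard_pos (Set.toFinite _), ← hAB, Set.ncard_pos (Set.toFinite _)]
    exact ⟨a, ha⟩
  obtain ⟨b, hb⟩ := hBne
  have hne : a ≠ b := fun h => hdisj a ha (h ▸ hb)
  obtain ⟨p⟩ := hconn.preconnected a b
  cases p with
  | nil => exact absurd rfl hne
  | cons h q =>
    rcases hadj _ _ h with ⟨h1, h2⟩ | ⟨h1, h2⟩
    · exact ⟨a, h1, _, h2, h⟩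
    · exact ⟨_, h2, a, h1, h.symm⟩

private lemma nbhd_of_covered {V : Type*} [Fintype V] (G : SimpleGraph V)
    (A B : Set V) (hbip : IsBipartition G A B) (hmc : IsMatchingCovered G) :
    ∀ Z : Set V, Z ⊆ A → Z.Nonempty → Z ≠ A → Z.ncard + 1 ≤ (setNbhd G Z).ncard := by
  intro Z hZA hZne hZneA
  obtain ⟨hconn, _, hcov⟩ := hmc
  obtain ⟨hcovAB, hdisjAB, hadj⟩ := hbip
  have hdisj : ∀ v, v ∈ A → v ∈ B → False := fun v h1 h2 =>
    Set.eq_empty_iff_forall_notMem.mp hdisjAB v ⟨h1, h2⟩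
  by_contra hlt
  push_neg at hlt
  have hle : (setNbhd G Z).ncard ≤ Z.ncard := Nat.lt_succ_iff.mp hlt
  have hNB : setNbhd G Z ⊆ B := by
    rintro v ⟨z, hz, hzv⟩
    rcases hadj _ _ hzv with ⟨_, h⟩ | ⟨h1, _⟩
    · exact h
    · exact absurd h1 (fun h => hdisj z (hZA hz) h)
  obtain ⟨a', ha'A, ha'Z⟩ := Set.exists_of_ssubset (hZA.ssubset_of_ne hZneA)
  obtain ⟨z₀, hz₀⟩ := hZne
  set X : Set V := Z ∪ setNbhd G Z with hXdef
  have ha'X : a' ∉ X := by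
    rintro (h | h)
    · exact ha'Z h
    · exact hdisj a' ha'A (hNB h)
  obtain ⟨p⟩ := hconn.preconnected z₀ a'
  obtain ⟨d, _, hdX, hdnX⟩ := p.exists_boundary_dart X (Or.inl hz₀) ha'X
  set u := d.fst
  set w := d.snd
  have huw : G.Adj u w := d.adj
  have huN : u ∈ setNbhd G Z := by
    rcases hdX with h | h
    · exact absurd (Or.inr ⟨u, h, huw⟩) hdnX
    · exact h
  have hwZ : w ∉ Z := fun h => hdnX (Or.inl h)
  obtain ⟨M, hM, hMe⟩ := hcov s(u, w) (G.mem_edgeSet.mpr huw)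
  rw [Subgraph.mem_edgeSet] at hMe
  obtain ⟨μ, hμ1, hμ2⟩ := partner_fn hM
  have hinv : ∀ v, μ (μ v) = v := fun v => (hμ2 (μ v) v ((hμ1 v).symm)).symm
  have hμinj : Function.Injective μ := fun x y h => by
    rw [← hinv x, h, hinv]
  have hμw : μ u = w := (hμ2 u w hMe).symm
  have hsub : μ '' Z ⊆ setNbhd G Z := by
    rintro v ⟨z, hz, rfl⟩
    exact ⟨z, hz, M.adj_sub (hμ1 z)⟩
  have heq : μ '' Z = setNbhd G Z :=
    Set.eq_of_subset_of_ncard_le hsub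
      (by rw [Set.ncard_image_of_injective _ hμinj]; exact hle) (Set.toFinite _)
  obtain ⟨z, hzZ, hzu⟩ := heq ▸ huN
  have : μ u = z := by rw [← hzu, hinv]
  exact hwZ (by rw [← hμw, this]; exact hzZ)


/-- For a connected bipartite graph `G[A,B]` with `|A| = |B|`, the
following are equivalent: (i) `G` is matching covered; (ii) `|N_G(Z)| ≥ |Z| + 1` for
every nonempty proper subset `Z` of `A`; (iii) `G − a − b` has a perfect matching for
each pair `a ∈ A`, `b ∈ B`. -/
theorem statement0 {V : Type*} [Fintype V] (G : SimpleGraph V) (A B : Set V)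
    (hconn : G.Connected) (hbip : IsBipartition G A B) (hAB : A.ncard = B.ncard) :
    (IsMatchingCovered G ↔
      ∀ Z : Set V, Z ⊆ A → Z.Nonempty → Z ≠ A → Z.ncard + 1 ≤ (setNbhd G Z).ncard) ∧
    (IsMatchingCovered G ↔
      ∀ a ∈ A, ∀ b ∈ B, HasPerfectMatching (G.induce ({a, b}ᶜ : Set V))) := by
  have h12 := nbhd_of_covered G A B hbip
  have h23 : (∀ Z : Set V, Z ⊆ A → Z.Nonempty → Z ≠ A →
      Z.ncard + 1 ≤ (setNbhd G Z).ncard) →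
      ∀ a ∈ A, ∀ b ∈ B, HasPerfectMatching (G.induce ({a, b}ᶜ : Set V)) :=
    fun h a ha b hb => hall_step G A B hbip hAB h ha hb
  have h31 : (∀ a ∈ A, ∀ b ∈ B, HasPerfectMatching (G.induce ({a, b}ᶜ : Set V))) →
      IsMatchingCovered G := by
    intro h3
    refine ⟨hconn, ?_, ?_⟩
    · obtain ⟨a, ha, b, hb, hab⟩ := exists_classified_edge G A B hconn hbip hAB
      exact ⟨s(a, b), G.mem_edgeSet.mpr hab⟩
    · intro e he
      induction e with
      | h u v =>
        rw [SimpleGraph.mem_edgeSet] at he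
        rcases hbip.2.2 u v he with ⟨hu, hv⟩ | ⟨hu, hv⟩
        · exact lift_pm G u v he (h3 u hu v hv)
        · obtain ⟨M, hM, hMe⟩ := lift_pm G v u he.symm (h3 v hv u hu)
          exact ⟨M, hM, by rwa [Sym2.eq_swap] at hMe⟩
  exact ⟨⟨h12, fun h2 => h31 (h23 h2)⟩, ⟨fun h1 => h23 (h12 h1), h31⟩⟩


end MinimalBraces
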